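/- Let E₁ be the set of operations on binary strings that increase the length by one, consisting of: inserting a single 0, inserting a single 1, replacing a 0 by the adjacent pair 11, and replacing a 1 by the adjacent pair 00. Then for any integers n ≥ 1, 0 ≤ a ≤ 2(n+1), 0 ≤ b ≤ 4, 0 ≤ c ≤ 2n, and any u, v ∈ C_{(a,b,c)}: if some binary word w ∈ {0,1}^{n+1} can be obtained from u by one operation from E₁ and also obtained from v by one operation from E₁, then u = v. -/

import Mathlib

namespace BinCode

/-- Hamming weight of a binary string. -/
def wt (u : List Bool) : ℕ := u.count true

/-- The VT syndrome `Σ_{i=1}^{|u|} i·u_i` (positions 1-indexed). -/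
def vtSum (u : List Bool) : ℕ := (u.zipIdx.map fun p => if p.1 then p.2 + 1 else 0).sum

/-- `Σ_{i=1}^{|u|} i · (u_1 + ⋯ + u_i)`. -/
def wSum (u : List Bool) : ℕ :=
  ((List.range u.length).map fun i => (i + 1) * wt (u.take (i + 1))).sum

/-- The (variable-length) Varshamov–Tenengolts code `C_VT(α, m)`. -/
def CVT (α m : ℕ) : Set (List Bool) := {z | z.length ≤ m - 1 ∧ vtSum z % m = α}

/-- The binary code `C_{(a,b,c)} ⊆ {0,1}^n`. -/
def Cabc (n a b c : ℕ) : Set (List Bool) :=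
  {u | u.length = n ∧ vtSum u % (2 * n + 3) = a ∧ wt u % 5 = b ∧
    wSum u % (2 * n + 1) = c}

/-- `w` is obtained from `u` by deleting one bit. -/
def delBit (u w : List Bool) : Prop := ∃ i, i < u.length ∧ w = u.eraseIdx i

/-- `w` is obtained from `u` by inserting the bit `b` at some position. -/
def insBitAt (u w : List Bool) (b : Bool) : Prop :=
  ∃ i, i ≤ u.length ∧ w = u.take i ++ b :: u.drop i

/-- `w` is obtained from `u` by inserting one bit. -/
def insBit (u w : List Bool) : Prop := ∃ b, insBitAt u w b

/-- Flip the bit at 0-based index `i`. -/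
def flipAt (u : List Bool) (i : ℕ) : List Bool := u.set i (!(u.getD i false))

/-- `w` is obtained from `u` by flipping one bit. -/
def flip1 (u w : List Bool) : Prop := ∃ i, i < u.length ∧ w = flipAt u i

/-- `w` is obtained from `u` by flipping two adjacent bits. -/
def flip2 (u w : List Bool) : Prop :=
  ∃ i, i + 1 < u.length ∧ w = flipAt (flipAt u i) (i + 1)

/-- `w` is obtained from `u` by replacing one bit by two adjacent bits via
`0 → 11` or `1 → 00`. -/
def expand1 (u w : List Bool) : Prop :=
  ∃ i, i < u.length ∧
    ((u.getD i false = false ∧ w = u.take i ++ true :: true :: u.drop (i + 1)) ∨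
     (u.getD i false = true ∧ w = u.take i ++ false :: false :: u.drop (i + 1)))

/-- `w` is obtained from `u` by inserting the adjacent pair `b b`. -/
def insPair (u w : List Bool) (b : Bool) : Prop :=
  ∃ i, i ≤ u.length ∧ w = u.take i ++ b :: b :: u.drop i

/-- `w` is obtained from `u` by replacing an occurrence of `1` by `010`. -/
def oneTo010 (u w : List Bool) : Prop :=
  ∃ i, i < u.length ∧ u.getD i false = true ∧
    w = u.take i ++ false :: true :: false :: u.drop (i + 1)


/-- The set `E₁` of operations increasing the length by one: inserting a `0`,
inserting a `1`, and the replacements `0 → 11` and `1 → 00`. -/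
def E1 (u w : List Bool) : Prop :=
  insBitAt u w false ∨ insBitAt u w true ∨ expand1 u w

lemma wt_cons (a : Bool) (l : List Bool) : wt (a :: l) = (if a then 1 else 0) + wt l := by
  cases a <;> simp [wt, List.count_cons] <;> omega

lemma wt_append (x y : List Bool) : wt (x ++ y) = wt x + wt y := List.count_append

lemma enumFrom_sum (l : List Bool) : ∀ k : ℕ,
    ((l.zipIdx k).map fun p => if p.1 then p.2 + 1 else 0).sum
    = ((l.zipIdx 0).map fun p => if p.1 then p.2 + 1 else 0).sum + k * wt l := by
  induction l with
  | nil => intro k; simp [wt]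
  | cons a l ih =>
    intro k
    simp only [List.zipIdx_cons, List.map_cons, List.sum_cons, ih (k+1), ih 1, wt_cons]
    cases a <;> simp <;> ring

lemma vtSum_cons (a : Bool) (l : List Bool) :
    vtSum (a :: l) = (if a then 1 else 0) + vtSum l + wt l := by
  have h0 : ∀ m : List Bool, vtSum m = ((m.zipIdx 0).map fun p => if p.1 then p.2 + 1 else 0).sum := by
    intro m; rfl
  rw [h0, h0, List.zipIdx_cons, List.map_cons, List.sum_cons, enumFrom_sum]
  cases a <;> simp <;> ring

lemma vtSum_append (x y : List Bool) :
    vtSum (x ++ y) = vtSum x + vtSum y + x.length * wt y := by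
  induction x with
  | nil => simp [vtSum]
  | cons a x ih =>
    rw [List.cons_append, vtSum_cons, ih, vtSum_cons, wt_append, List.length_cons]
    cases a <;> simp <;> ring


lemma cancel (m A B x y : ℕ) (h : A % m = B % m) (he : A + x = B + y)
    (hx : x < m) (hy : y < m) : x = y := by
  have h2 : x ≡ y [MOD m] := Nat.ModEq.add_left_cancel h (by rw [he])
  rwa [Nat.ModEq, Nat.mod_eq_of_lt hx, Nat.mod_eq_of_lt hy] at h2

/-- one step of erase-chaining -/
lemma erase_step (w : List Bool) (j : ℕ) (hj : j + 1 < w.length)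
    (h : w.getD j false = w.getD (j+1) false) :
    w.take j ++ w.drop (j+1) = w.take (j+1) ++ w.drop (j+2) := by
  have hj' : j < w.length := by omega
  rw [List.getD_eq_getElem _ _ hj', List.getD_eq_getElem _ _ hj] at h
  rw [List.drop_eq_getElem_cons hj, List.take_succ]
  have : w[j]? = some w[j] := List.getElem?_eq_getElem hj'
  rw [this]
  simp [h]

lemma erase_chain (w : List Bool) (bb : Bool) (i j : ℕ) (hij : i ≤ j) :
    j < w.length → (∀ k, i ≤ k → k ≤ j → w.getD k false = bb) →
    w.take i ++ w.drop (i+1) = w.take j ++ w.drop (j+1) := by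
  induction j, hij using Nat.le_induction with
  | base => intros; rfl
  | succ j hij ih =>
    intro hj hk
    have h1 := ih (by omega) (fun k h1 h2 => hk k h1 (by omega))
    rw [h1]
    exact erase_step w j hj (by rw [hk j (by omega) (by omega), hk (j+1) (by omega) (by omega)])

lemma wt_drop_split (w : List Bool) (p q : ℕ) (h : p ≤ q) :
    wt (w.drop p) = wt ((w.drop p).take (q - p)) + wt (w.drop q) := by
  conv_lhs => rw [← List.take_append_drop (q - p) (w.drop p)]
  have hq : p + (q - p) = q := by omega
  rw [wt_append, List.drop_drop, hq]

lemma seg_const (w : List Bool) (p j : ℕ) (bb : Bool) (hij : p ≤ j + 1) (hj : j < w.length)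
    (hS : wt ((w.drop p).take (j + 1 - p)) = if bb then j + 1 - p else 0) :
    ∀ k, p ≤ k → k ≤ j → w.getD k false = bb := by
  intro k h1 h2
  have hk : k < w.length := lt_of_le_of_lt h2 hj
  have hidx2 : k - p < ((w.drop p).take (j + 1 - p)).length := by
    rw [List.length_take, List.length_drop]; omega
  have hel : ((w.drop p).take (j + 1 - p))[k - p]'hidx2 = w.getD k false := by
    rw [List.getElem_take, List.getElem_drop, List.getD_eq_getElem _ _ hk]
    congr 1
    omega
  have hmem := List.getElem_mem hidx2
  cases bb with
  | false =>
    simp only [Bool.false_eq_true, if_false] at hS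
    have : true ∉ (w.drop p).take (j + 1 - p) := List.count_eq_zero.1 hS
    rw [← hel]
    rcases Bool.eq_false_or_eq_true (((w.drop p).take (j + 1 - p))[k - p]'hidx2) with h | h
    · exact absurd (h ▸ hmem) this
    · exact h
  | true =>
    have hlen : ((w.drop p).take (j + 1 - p)).length = j + 1 - p := by
      rw [List.length_take, List.length_drop]; omega
    have hS' : List.count true ((w.drop p).take (j + 1 - p)) = ((w.drop p).take (j + 1 - p)).length := by
      rw [hlen]; simpa [wt] using hS
    have := List.count_eq_length.1 hS'
    rw [← hel]
    exact (this _ hmem).symm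


lemma ins_facts (u w : List Bool) (bb : Bool) (i : ℕ) (hi : i ≤ u.length)
    (hw : w = u.take i ++ bb :: u.drop i) :
    w.length = u.length + 1 ∧
    wt w = wt u + (if bb then 1 else 0) ∧
    vtSum w = vtSum u + ((if bb then i + 1 else 0) + wt (w.drop (i+1))) ∧
    w.getD i false = bb ∧
    u = w.take i ++ w.drop (i+1) := by
  have hs : (u.take i).length = i := by rw [List.length_take]; omega
  have htake : w.take i = u.take i := by rw [hw, List.take_left' hs]
  have hdrop : w.drop i = bb :: u.drop i := by rw [hw, List.drop_left' hs]
  have hdrop1 : w.drop (i+1) = u.drop i := by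
    rw [← List.drop_drop (i := 1) (j := i) (l := w), hdrop]; rfl
  have hudec : u.take i ++ u.drop i = u := List.take_append_drop i u
  have hlen : w.length = u.length + 1 := by
    rw [hw]; simp; omega
  have hwu' : wt u = wt (u.take i) + wt (u.drop i) := by
    conv_lhs => rw [← hudec]
    rw [wt_append]
  have hwt : wt w = wt u + (if bb then 1 else 0) := by
    rw [hw, wt_append, wt_cons, hwu']
    cases bb <;> simp <;> omega
  refine ⟨hlen, hwt, ?_, ?_, ?_⟩
  · have hvu : vtSum u = vtSum (u.take i) + vtSum (u.drop i) + i * wt (u.drop i) := by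
      conv_lhs => rw [← hudec]
      rw [vtSum_append, hs]
    rw [hdrop1, hw, vtSum_append, vtSum_cons, wt_cons, hs, hvu]
    cases bb <;> simp <;> ring
  · have hiw : i < w.length := by omega
    have h0 : 0 < (w.drop i).length := by rw [List.length_drop]; omega
    rw [List.getD_eq_getElem _ _ hiw]
    calc w[i] = (w.drop i)[0]'h0 := by rw [List.getElem_drop]; simp
      _ = bb := by simp [hdrop]
  · rw [htake, hdrop1, hudec]

lemma exp_facts (u w : List Bool) (bb : Bool) (i : ℕ) (hi : i < u.length)
    (hb : u.getD i false = bb) (hw : w = u.take i ++ (!bb) :: (!bb) :: u.drop (i+1)) :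
    w.length = u.length + 1 ∧
    wt w + (if bb then 1 else 0) = wt u + (if bb then 0 else 2) ∧
    vtSum w + (if bb then i + 1 else 0)
      = vtSum u + (if bb then 0 else 2*i+3) + wt (w.drop (i+2)) ∧
    u = w.take i ++ bb :: w.drop (i+2) := by
  have hs : (u.take i).length = i := by rw [List.length_take]; omega
  have hudec : u = u.take i ++ bb :: u.drop (i+1) := by
    conv_lhs => rw [← List.take_append_drop i u, List.drop_eq_getElem_cons hi]
    rw [List.getD_eq_getElem _ _ hi] at hb
    rw [hb]
  have htake : w.take i = u.take i := by rw [hw, List.take_left' hs]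
  have hdrop : w.drop i = (!bb) :: (!bb) :: u.drop (i+1) := by rw [hw, List.drop_left' hs]
  have hdrop2 : w.drop (i+2) = u.drop (i+1) := by
    rw [← List.drop_drop (i := 2) (j := i) (l := w), hdrop]; rfl
  have hul : u.length = i + 1 + (u.drop (i+1)).length := by
    conv_lhs => rw [hudec]
    simp [hs]; omega
  have hlen : w.length = u.length + 1 := by
    rw [hw]; simp; omega
  have hwu' : wt u = wt (u.take i) + ((if bb then 1 else 0) + wt (u.drop (i+1))) := by
    conv_lhs => rw [hudec]
    rw [wt_append, wt_cons]
  have hwt : wt w + (if bb then 1 else 0) = wt u + (if bb then 0 else 2) := by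
    rw [hw, wt_append, wt_cons, wt_cons, hwu']
    cases bb <;> simp <;> omega
  refine ⟨hlen, hwt, ?_, ?_⟩
  · have hvu : vtSum u = vtSum (u.take i) + ((if bb then 1 else 0) + vtSum (u.drop (i+1))
        + wt (u.drop (i+1))) + i * ((if bb then 1 else 0) + wt (u.drop (i+1))) := by
      conv_lhs => rw [hudec]
      rw [vtSum_append, vtSum_cons, wt_cons, hs]
    rw [hdrop2, hw, vtSum_append, vtSum_cons, vtSum_cons, wt_cons, wt_cons, hs, hvu]
    cases bb <;> simp [wt_cons] <;> ring
  · rw [htake, hdrop2]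
    exact hudec


lemma wt_drop_le (w : List Bool) (p : ℕ) : wt (w.drop p) ≤ w.length - p := by
  have := List.count_le_length (a := true) (l := w.drop p)
  rw [List.length_drop] at this
  exact this

lemma ins_same (n : ℕ) (u v w : List Bool) (bb : Bool) (i j : ℕ)
    (hun : u.length = n) (hvn : v.length = n)
    (hmod : vtSum u % (2*n+3) = vtSum v % (2*n+3))
    (hi : i ≤ u.length) (hj : j ≤ v.length) (hij : i ≤ j)
    (hwu : w = u.take i ++ bb :: u.drop i) (hwv : w = v.take j ++ bb :: v.drop j) :
    u = v := by
  obtain ⟨hl, hwt, hvt, hgd, huw⟩ := ins_facts u w bb i hi hwu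
  obtain ⟨hl', hwt', hvt', hgd', hvw⟩ := ins_facts v w bb j hj hwv
  have hwl : w.length = n + 1 := by omega
  have hsplit := wt_drop_split w (i+1) (j+1) (by omega)
  have hb0 : wt (w.drop (i+1)) ≤ n - i := by have := wt_drop_le w (i+1); omega
  have hb1 : wt (w.drop (j+1)) ≤ n - j := by have := wt_drop_le w (j+1); omega
  have hb2 : wt ((w.drop (i+1)).take (j + 1 - (i+1))) ≤ j - i := by
    have := List.count_le_length (a := true) (l := (w.drop (i+1)).take (j + 1 - (i+1)))
    rw [List.length_take] at this
    have h2 : j + 1 - (i+1) = j - i := by omega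
    calc wt ((w.drop (i+1)).take (j + 1 - (i+1))) ≤ _ := this
    _ ≤ j + 1 - (i + 1) := min_le_left _ _
    _ = j - i := h2
  have key : (if bb then i+1 else 0) + wt (w.drop (i+1))
      = (if bb then j+1 else 0) + wt (w.drop (j+1)) := by
    refine cancel (2*n+3) (vtSum u) (vtSum v) _ _ hmod (by omega) ?_ ?_
    · cases bb <;> simp <;> omega
    · cases bb <;> simp <;> omega
  have e : j + 1 - (i+1) = j - i := by omega
  rw [e] at hsplit hb2
  have hSval : wt ((w.drop (i+1)).take (j + 1 - (i+1)))
      = if bb then j + 1 - (i+1) else 0 := by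
    rw [e]
    cases bb <;> simp at key ⊢ <;> omega
  have hall : ∀ k, i ≤ k → k ≤ j → w.getD k false = bb := by
    intro k hk1 hk2
    rcases Nat.eq_or_lt_of_le hk1 with h | h
    · rwa [← h]
    · exact seg_const w (i+1) j bb (by omega) (by omega) hSval k (by omega) hk2
  rw [huw, hvw]
  exact erase_chain w bb i j hij (by omega) hall

lemma exp_same (n : ℕ) (u v w : List Bool) (bb : Bool) (i j : ℕ)
    (hun : u.length = n) (hvn : v.length = n)
    (hmod : vtSum u % (2*n+3) = vtSum v % (2*n+3))
    (hi : i < u.length) (hj : j < v.length) (hij : i ≤ j)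
    (hbu : u.getD i false = bb) (hbv : v.getD j false = bb)
    (hwu : w = u.take i ++ (!bb) :: (!bb) :: u.drop (i+1))
    (hwv : w = v.take j ++ (!bb) :: (!bb) :: v.drop (j+1)) :
    u = v := by
  obtain ⟨hl, hwt, hvt, huw⟩ := exp_facts u w bb i hi hbu hwu
  obtain ⟨hl', hwt', hvt', hvw⟩ := exp_facts v w bb j hj hbv hwv
  have hwl : w.length = n + 1 := by omega
  have hsplit := wt_drop_split w (i+2) (j+2) (by omega)
  have hb0 : wt (w.drop (i+2)) ≤ n - 1 - i := by have := wt_drop_le w (i+2); omega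
  have hb1 : wt (w.drop (j+2)) ≤ n - 1 - j := by have := wt_drop_le w (j+2); omega
  have hb2 : wt ((w.drop (i+2)).take (j + 2 - (i+2))) ≤ j - i := by
    have := List.count_le_length (a := true) (l := (w.drop (i+2)).take (j + 2 - (i+2)))
    rw [List.length_take] at this
    calc wt ((w.drop (i+2)).take (j + 2 - (i+2))) ≤ _ := this
    _ ≤ j + 2 - (i + 2) := min_le_left _ _
    _ = j - i := by omega
  have hij' : i = j := by
    cases bb with
    | false =>
      simp only [Bool.false_eq_true, if_false] at hvt hvt'
      have key := cancel (2*n+3) (vtSum u) (vtSum v)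
        (2*i+3 + wt (w.drop (i+2))) (2*j+3 + wt (w.drop (j+2))) hmod (by omega)
        (by omega) (by omega)
      omega
    | true =>
      simp only [if_true] at hvt hvt'
      have key := cancel (2*n+3) (vtSum u) (vtSum v)
        (wt ((w.drop (i+2)).take (j + 2 - (i+2))) + j + 1) (i + 1) hmod (by omega)
        (by omega) (by omega)
      omega
  rw [huw, hvw, hij']


/-- `C_{(a,b,c)}` corrects a single occurrence of an operation
from `E₁`. -/
theorem code_abc_corrects_plus_one
    (n a b c : ℕ) (hn : 1 ≤ n) (ha : a ≤ 2 * (n + 1)) (hb : b ≤ 4) (hc : c ≤ 2 * n)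
    (u v : List Bool) (hu : u ∈ Cabc n a b c) (hv : v ∈ Cabc n a b c)
    (w : List Bool) (hwlen : w.length = n + 1)
    (hw1 : E1 u w) (hw2 : E1 v w) : u = v := by
  obtain ⟨hul, hua, hub, -⟩ := hu
  obtain ⟨hvl, hva, hvb, -⟩ := hv
  have hmod : vtSum u % (2*n+3) = vtSum v % (2*n+3) := by rw [hua, hva]
  have h5 : wt u % 5 = wt v % 5 := by rw [hub, hvb]
  have norm : ∀ x : List Bool, E1 x w →
      (∃ bb i, i ≤ x.length ∧ w = x.take i ++ bb :: x.drop i) ∨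
      (∃ bb i, i < x.length ∧ x.getD i false = bb ∧
        w = x.take i ++ (!bb) :: (!bb) :: x.drop (i+1)) := by
    intro x hx
    rcases hx with ⟨i, hi, hwx⟩ | ⟨i, hi, hwx⟩ | ⟨i, hi, h⟩
    · exact Or.inl ⟨false, i, hi, hwx⟩
    · exact Or.inl ⟨true, i, hi, hwx⟩
    · rcases h with ⟨hbx, hwx⟩ | ⟨hbx, hwx⟩
      · exact Or.inr ⟨false, i, hi, hbx, by simpa using hwx⟩
      · exact Or.inr ⟨true, i, hi, hbx, by simpa using hwx⟩
  rcases norm u hw1 with ⟨b1, i, hi, hwu⟩ | ⟨b1, i, hi, hbu, hwu⟩ <;>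
    rcases norm v hw2 with ⟨b2, j, hj, hwv⟩ | ⟨b2, j, hj, hbv, hwv⟩
  · -- ins / ins
    obtain ⟨-, hwt1, -, -, -⟩ := ins_facts u w b1 i hi hwu
    obtain ⟨-, hwt2, -, -, -⟩ := ins_facts v w b2 j hj hwv
    by_cases hbeq : b1 = b2
    · subst hbeq
      rcases le_total i j with h | h
      · exact ins_same n u v w b1 i j hul hvl hmod hi hj h hwu hwv
      · exact (ins_same n v u w b1 j i hvl hul hmod.symm hj hi h hwv hwu).symm
    · exfalso
      have := cancel 5 (wt u) (wt v) (if b1 then 1 else 0) (if b2 then 1 else 0) h5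
        (by omega) (by cases b1 <;> norm_num) (by cases b2 <;> norm_num)
      cases b1 <;> cases b2 <;> simp_all
  · -- ins / exp
    obtain ⟨-, hwt1, -, -, -⟩ := ins_facts u w b1 i hi hwu
    obtain ⟨-, hwt2, -, -⟩ := exp_facts v w b2 j hj hbv hwv
    exfalso
    have := cancel 5 (wt u) (wt v) ((if b1 then 1 else 0) + (if b2 then 1 else 0))
      (if b2 then 0 else 2) h5 (by omega)
      (by cases b1 <;> cases b2 <;> norm_num) (by cases b2 <;> norm_num)
    cases b1 <;> cases b2 <;> simp_all
  · -- exp / ins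
    obtain ⟨-, hwt1, -, -⟩ := exp_facts u w b1 i hi hbu hwu
    obtain ⟨-, hwt2, -, -, -⟩ := ins_facts v w b2 j hj hwv
    exfalso
    have := cancel 5 (wt u) (wt v) (if b1 then 0 else 2)
      ((if b2 then 1 else 0) + (if b1 then 1 else 0)) h5 (by omega)
      (by cases b1 <;> norm_num) (by cases b1 <;> cases b2 <;> norm_num)
    cases b1 <;> cases b2 <;> simp_all
  · -- exp / exp
    obtain ⟨-, hwt1, -, -⟩ := exp_facts u w b1 i hi hbu hwu
    obtain ⟨-, hwt2, -, -⟩ := exp_facts v w b2 j hj hbv hwv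
    by_cases hbeq : b1 = b2
    · subst hbeq
      rcases le_total i j with h | h
      · exact exp_same n u v w b1 i j hul hvl hmod hi hj h hbu hbv hwu hwv
      · exact (exp_same n v u w b1 j i hvl hul hmod.symm hj hi h hbv hbu hwv hwu).symm
    · exfalso
      have := cancel 5 (wt u) (wt v)
        ((if b1 then 0 else 2) + (if b2 then 1 else 0))
        ((if b2 then 0 else 2) + (if b1 then 1 else 0)) h5 (by omega)
        (by cases b1 <;> cases b2 <;> norm_num) (by cases b1 <;> cases b2 <;> norm_num)
      cases b1 <;> cases b2 <;> simp_all

end BinCode
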